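/- For Q = √(4C² - R²) with |R| < 2C and C > 0, the function θ(r) = 2·arctan(((2C - R)/Q)·tan(rQ/2)) satisfies θ'(r) = Q²/(2C + R cos(rQ)) on every interval where tan(rQ/2) is defined. -/

import Mathlib

theorem cy_theta_deriv (C R : ℝ) (hR : |R| < 2*C) (hC : C > 0)
    (Q : ℝ) (hQ : Q = Real.sqrt (4*C^2 - R^2)) :
    let θ : ℝ → ℝ := fun r => 2 * Real.arctan (((2*C - R)/Q) * Real.tan (r*Q/2))
    ∀ r, Real.cos (r*Q/2) ≠ 0 →
      HasDerivAt θ (Q^2/(2*C + R*Real.cos (r*Q))) r := by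
  intro θ r hcos
  have habs := abs_lt.mp hR
  have hpos : 0 < 4*C^2 - R^2 := by nlinarith
  have hQ2 : Q^2 = 4*C^2 - R^2 := by
    rw [hQ, Real.sq_sqrt hpos.le]
  have hQpos : 0 < Q := by
    rw [hQ]; exact Real.sqrt_pos.mpr hpos
  have hQne : Q ≠ 0 := hQpos.ne'
  have hden : 2*C + R*Real.cos (r*Q) ≠ 0 := by
    have h1 : |R * Real.cos (r*Q)| < 2*C := by
      calc |R * Real.cos (r*Q)| ≤ |R| * 1 := by
            rw [abs_mul]
            exact mul_le_mul_of_nonneg_left (Real.abs_cos_le_one _) (abs_nonneg _)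
        _ < 2*C := by simpa using hR
    have := (abs_lt.mp h1).1
    linarith
  set k : ℝ := (2*C - R)/Q with hk
  have h1 : HasDerivAt (fun r : ℝ => r*Q/2) (Q/2) r := by
    simpa using ((hasDerivAt_id r).mul_const Q).div_const 2
  have h2 : HasDerivAt (fun r : ℝ => Real.tan (r*Q/2))
      (1 / Real.cos (r*Q/2)^2 * (Q/2)) r :=
    by have h := (Real.hasDerivAt_tan hcos).comp r h1; exact h
  have h3 : HasDerivAt (fun r : ℝ => k * Real.tan (r*Q/2))
      (k * (1 / Real.cos (r*Q/2)^2 * (Q/2))) r := h2.const_mul k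
  have h4 : HasDerivAt (fun r : ℝ => Real.arctan (k * Real.tan (r*Q/2)))
      (1 / (1 + (k * Real.tan (r*Q/2))^2) * (k * (1 / Real.cos (r*Q/2)^2 * (Q/2)))) r :=
    (Real.hasDerivAt_arctan _).comp r h3
  have h5 := h4.const_mul 2
  convert h5 using 1
  · rfl
  · rfl
  have hsum : 1 + (k * Real.tan (r*Q/2))^2 ≠ 0 := by positivity
  have hcos2 : Real.cos (r*Q) = 2 * Real.cos (r*Q/2)^2 - 1 := by
    have h := Real.cos_two_mul (r*Q/2)
    rwa [show 2*(r*Q/2) = r*Q by ring] at h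
  have hsin : Real.sin (r*Q/2)^2 = 1 - Real.cos (r*Q/2)^2 := by
    nlinarith [Real.sin_sq_add_cos_sq (r*Q/2)]
  have hden' : 2*C + R*(2 * Real.cos (r*Q/2)^2 - 1) ≠ 0 := by rwa [hcos2] at hden
  rw [Real.tan_eq_sin_div_cos, hk, hcos2]
  rw [show r*Q = Q*r by ring] at hcos hsin hden' ⊢
  field_simp
  linear_combination (2*C-R)^2*hsin + Real.cos (Q*r/2)^2*hQ2
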